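/- If random variables {A_i}_{i∈E} satisfy the Fano-non-Fano condition, then there exists an abelian group labeling (𝒜, {θ_i}_{i∈E}) of {A_i}_{i∈E}. -/

import Mathlib

open scoped Classical

noncomputable section

/-- The probability of the event `S` under the probability mass function `p`. -/
def Pr {Ω : Type} (p : Ω → ℝ) (S : Set Ω) : ℝ := ∑' ω : S, p ω

/-- `p` is a probability mass function on the sample space `Ω`. -/
def IsProb {Ω : Type} (p : Ω → ℝ) : Prop := (∀ ω, 0 ≤ p ω) ∧ Pr p Set.univ = 1

/-- The support of a random variable `X`: the set of values attained with positive
probability. -/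
def supp {Ω α : Type} (p : Ω → ℝ) (X : Ω → α) : Set α := {a | 0 < Pr p {ω | X ω = a}}

/-- `X` is almost surely a function of `Y` (written `X ≤ι Y` in the paper). -/
def FuncOf {Ω α β : Type} (p : Ω → ℝ) (X : Ω → α) (Y : Ω → β) : Prop :=
  ∃ f : β → α, Pr p {ω | X ω = f (Y ω)} = 1

/-- The random variables `X` and `Y` are independent. -/
def IndepRV {Ω α β : Type} (p : Ω → ℝ) (X : Ω → α) (Y : Ω → β) : Prop :=
  ∀ (a : α) (b : β), Pr p {ω | X ω = a ∧ Y ω = b} = Pr p {ω | X ω = a} * Pr p {ω | Y ω = b}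

/-- The random variables `X`, `Y`, `Z` are mutually independent:
`X ⟂ Y` and `(X, Y) ⟂ Z`. -/
def Indep3 {Ω α β γ : Type} (p : Ω → ℝ) (X : Ω → α) (Y : Ω → β) (Z : Ω → γ) : Prop :=
  IndepRV p X Y ∧ IndepRV p (fun ω => (X ω, Y ω)) Z

/-- The predicate `tri(X, Y, Z)`: each variable is a.s. a function of the other two, and the
three variables are pairwise independent. -/
def tri {Ω α β γ : Type} (p : Ω → ℝ) (X : Ω → α) (Y : Ω → β) (Z : Ω → γ) : Prop :=
  FuncOf p X (fun ω => (Y ω, Z ω)) ∧ FuncOf p Y (fun ω => (X ω, Z ω)) ∧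
    FuncOf p Z (fun ω => (X ω, Y ω)) ∧
    IndepRV p X Y ∧ IndepRV p X Z ∧ IndepRV p Y Z

/- The ground set `E = {1,2,3,12,13,23,123}` is represented by `Fin 7`, where
`0 ↦ 1`, `1 ↦ 2`, `2 ↦ 3`, `3 ↦ 12`, `4 ↦ 13`, `5 ↦ 23`, `6 ↦ 123`. -/

/-- `{i,j,k}` is one of the dependent 3-sets of the non-Fano matroid, i.e. one of
`{1,2,12}, {1,3,13}, {2,3,23}, {1,23,123}, {2,13,123}, {3,12,123}`. -/
def inDN (i j k : Fin 7) : Prop :=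
  ({i, j, k} : Finset (Fin 7)) ∈
    ({{0, 1, 3}, {0, 2, 4}, {1, 2, 5}, {0, 5, 6}, {1, 4, 6}, {2, 3, 6}} :
      Finset (Finset (Fin 7)))

/-- `{i,j,k}` is a dependent 3-set of the Fano matroid (`D_F = D_N ∪ {{12,13,23}}`). -/
def inDF (i j k : Fin 7) : Prop :=
  inDN i j k ∨ ({i, j, k} : Finset (Fin 7)) = {3, 4, 5}

/-- `{i,j,k}` is an independent 3-set of the Fano matroid: a 3-element subset of `E`
not in `D_F`. -/
def inIF (i j k : Fin 7) : Prop :=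
  ({i, j, k} : Finset (Fin 7)).card = 3 ∧ ¬ inDF i j k

/-- The Fano-non-Fano condition on the seven random variables `A 0, …, A 6`
(representing `A_1, A_2, A_3, A_12, A_13, A_23, A_123`): `tri` holds for every triple in
`D_N`, and mutual independence holds for every triple in `I_F`. -/
def fnf {Ω : Type} (p : Ω → ℝ) {α : Fin 7 → Type} (A : ∀ i, Ω → α i) : Prop :=
  (∀ i j k, inDN i j k → tri p (A i) (A j) (A k)) ∧
  (∀ i j k, inIF i j k → Indep3 p (A i) (A j) (A k))

/-- `(𝒜, θ)` is an abelian group labeling of `A 0, …, A 6`: `𝒜` is an abelian group,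
each `θ i` is a bijection from the support of `A i` onto `𝒜`, and almost surely
`θ_12(A_12) = θ_1(A_1) + θ_2(A_2)`, `θ_13(A_13) = θ_1(A_1) + θ_3(A_3)`,
`θ_23(A_23) = θ_2(A_2) + θ_3(A_3)`, `θ_123(A_123) = θ_1(A_1) + θ_2(A_2) + θ_3(A_3)`. -/
def IsAbelianLabeling {Ω : Type} (p : Ω → ℝ) {α : Fin 7 → Type} (A : ∀ i, Ω → α i)
    (𝒜 : Type) [AddCommGroup 𝒜] (θ : ∀ i, α i → 𝒜) : Prop :=
  (∀ i, Set.BijOn (θ i) (supp p (A i)) Set.univ) ∧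
  Pr p {ω | θ 3 (A 3 ω) = θ 0 (A 0 ω) + θ 1 (A 1 ω)
      ∧ θ 4 (A 4 ω) = θ 0 (A 0 ω) + θ 2 (A 2 ω)
      ∧ θ 5 (A 5 ω) = θ 1 (A 1 ω) + θ 2 (A 2 ω)
      ∧ θ 6 (A 6 ω) = θ 0 (A 0 ω) + θ 1 (A 1 ω) + θ 2 (A 2 ω)} = 1

section PrAux

variable {Ω : Type} {p : Ω → ℝ}

lemma summable_of_isProb (hp : IsProb p) : Summable p := by
  by_contra hns
  have h0 : Pr p Set.univ = 0 := by
    have : Pr p Set.univ = ∑' ω, p ω := tsum_univ p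
    rw [this]
    exact tsum_eq_zero_of_not_summable hns
  rw [hp.2] at h0; norm_num at h0

lemma Pr_nonneg (hp : IsProb p) (S : Set Ω) : 0 ≤ Pr p S :=
  tsum_nonneg fun ω => hp.1 ω

lemma Pr_union_disjoint (hp : IsProb p) {S T : Set Ω} (hST : Disjoint S T) :
    Pr p (S ∪ T) = Pr p S + Pr p T :=
  Summable.tsum_union_disjoint hST ((summable_of_isProb hp).subtype S)
    ((summable_of_isProb hp).subtype T)

lemma Pr_mono (hp : IsProb p) {S T : Set Ω} (hST : S ⊆ T) : Pr p S ≤ Pr p T := by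
  have h1 : T = S ∪ (T \ S) := (Set.union_diff_cancel hST).symm
  have h2 := Pr_nonneg hp (T \ S)
  rw [h1, Pr_union_disjoint hp Set.disjoint_sdiff_right]
  linarith

lemma Pr_add_compl (hp : IsProb p) (S : Set Ω) : Pr p S + Pr p Sᶜ = 1 := by
  rw [← Pr_union_disjoint hp disjoint_compl_right, Set.union_compl_self, hp.2]

lemma Pr_le_one (hp : IsProb p) (S : Set Ω) : Pr p S ≤ 1 := by
  rw [← hp.2]; exact Pr_mono hp (Set.subset_univ S)

lemma Pr_inter_of_one (hp : IsProb p) {E F : Set Ω} (hF : Pr p F = 1) :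
    Pr p (E ∩ F) = Pr p E := by
  have hFc : Pr p Fᶜ = 0 := by have := Pr_add_compl hp F; linarith
  have hdisj : Disjoint (E ∩ F) (E \ F) :=
    Set.disjoint_left.mpr fun {x} hx hx' => hx'.2 hx.2
  have h1 : Pr p E = Pr p (E ∩ F) + Pr p (E \ F) := by
    conv_lhs => rw [← Set.inter_union_diff E F]
    exact Pr_union_disjoint hp hdisj
  have h2 : Pr p (E \ F) ≤ Pr p Fᶜ := Pr_mono hp fun x hx => hx.2
  have h3 := Pr_nonneg hp (E \ F)
  linarith

lemma exists_pos_of_Pr_pos (hp : IsProb p) {S : Set Ω} (hS : 0 < Pr p S) :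
    ∃ ω, ω ∈ S ∧ 0 < p ω := by
  by_contra hn
  push_neg at hn
  have : Pr p S ≤ 0 := tsum_nonpos fun x => hn x.1 x.2
  linarith

lemma p_le_Pr (hp : IsProb p) {S : Set Ω} {ω : Ω} (hω : ω ∈ S) : p ω ≤ Pr p S :=
  Summable.le_tsum ((summable_of_isProb hp).subtype S) ⟨ω, hω⟩ (fun j _ => hp.1 j.1)

lemma mem_of_Pr_one (hp : IsProb p) {F : Set Ω} (hF : Pr p F = 1) {ω : Ω}
    (hω : 0 < p ω) : ω ∈ F := by
  by_contra hn
  have h1 : p ω ≤ Pr p Fᶜ := p_le_Pr hp hn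
  have h2 : Pr p Fᶜ = 0 := by have := Pr_add_compl hp F; linarith
  linarith

lemma mem_supp_of_pos (hp : IsProb p) {α : Type} (X : Ω → α) {ω : Ω}
    (hω : 0 < p ω) : X ω ∈ supp p X :=
  lt_of_lt_of_le hω (p_le_Pr hp (show X ω = X ω from rfl))

lemma indep_pos (hp : IsProb p) {α β : Type} {X : Ω → α} {Y : Ω → β}
    (hXY : IndepRV p X Y) {a : α} {b : β} (ha : a ∈ supp p X) (hb : b ∈ supp p Y) :
    0 < Pr p {ω | X ω = a ∧ Y ω = b} := by
  rw [hXY a b]; exact mul_pos ha hb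

/-- The combinatorial package extracted from `tri`: a function `F` with `Z = F X Y` a.s.,
which restricts to a "Latin square" structure on the supports. -/
lemma tri_pack {Ω α β γ : Type} {p : Ω → ℝ} (hp : IsProb p) {X : Ω → α} {Y : Ω → β}
    {Z : Ω → γ} (ht : tri p X Y Z) :
    ∃ F : α → β → γ,
      (∀ ω, 0 < p ω → Z ω = F (X ω) (Y ω)) ∧
      (∀ a, a ∈ supp p X → ∀ b, b ∈ supp p Y → F a b ∈ supp p Z) ∧
      (∀ a, a ∈ supp p X → ∀ a', a' ∈ supp p X → ∀ b, b ∈ supp p Y →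
        F a b = F a' b → a = a') ∧
      (∀ a, a ∈ supp p X → ∀ b, b ∈ supp p Y → ∀ b', b' ∈ supp p Y →
        F a b = F a b' → b = b') ∧
      (∀ b, b ∈ supp p Y → ∀ s, s ∈ supp p Z → ∃ a, a ∈ supp p X ∧ F a b = s) ∧
      (∀ a, a ∈ supp p X → ∀ s, s ∈ supp p Z → ∃ b, b ∈ supp p Y ∧ F a b = s) := by
  obtain ⟨FX, hFX⟩ := ht.1
  obtain ⟨FY, hFY⟩ := ht.2.1
  obtain ⟨FZ, hFZ⟩ := ht.2.2.1
  obtain ⟨hXY, hXZ, hYZ⟩ := ht.2.2.2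
  refine ⟨fun a b => FZ (a, b), ?_, ?_, ?_, ?_, ?_, ?_⟩
  · intro ω hω
    exact mem_of_Pr_one hp hFZ hω
  · intro a ha b hb
    obtain ⟨ω, hωE, hωp⟩ := exists_pos_of_Pr_pos hp (indep_pos hp hXY ha hb)
    have h1 : Z ω = FZ (X ω, Y ω) := mem_of_Pr_one hp hFZ hωp
    rw [hωE.1, hωE.2] at h1
    have h2 := mem_supp_of_pos hp Z hωp
    rwa [h1] at h2
  · intro a ha a' ha' b hb heq
    have heq' : FZ (a, b) = FZ (a', b) := heq
    obtain ⟨ω1, h1, hp1⟩ := exists_pos_of_Pr_pos hp (indep_pos hp hXY ha hb)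
    obtain ⟨ω2, h2, hp2⟩ := exists_pos_of_Pr_pos hp (indep_pos hp hXY ha' hb)
    have e1 : X ω1 = FX (Y ω1, Z ω1) := mem_of_Pr_one hp hFX hp1
    have e2 : X ω2 = FX (Y ω2, Z ω2) := mem_of_Pr_one hp hFX hp2
    have z1 : Z ω1 = FZ (X ω1, Y ω1) := mem_of_Pr_one hp hFZ hp1
    have z2 : Z ω2 = FZ (X ω2, Y ω2) := mem_of_Pr_one hp hFZ hp2
    rw [h1.1, h1.2] at z1
    rw [h2.1, h2.2] at z2
    rw [h1.1, h1.2, z1] at e1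
    rw [h2.1, h2.2, z2] at e2
    rw [heq'] at e1
    exact e1.trans e2.symm
  · intro a ha b hb b' hb' heq
    have heq' : FZ (a, b) = FZ (a, b') := heq
    obtain ⟨ω1, h1, hp1⟩ := exists_pos_of_Pr_pos hp (indep_pos hp hXY ha hb)
    obtain ⟨ω2, h2, hp2⟩ := exists_pos_of_Pr_pos hp (indep_pos hp hXY ha hb')
    have e1 : Y ω1 = FY (X ω1, Z ω1) := mem_of_Pr_one hp hFY hp1
    have e2 : Y ω2 = FY (X ω2, Z ω2) := mem_of_Pr_one hp hFY hp2
    have z1 : Z ω1 = FZ (X ω1, Y ω1) := mem_of_Pr_one hp hFZ hp1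
    have z2 : Z ω2 = FZ (X ω2, Y ω2) := mem_of_Pr_one hp hFZ hp2
    rw [h1.1, h1.2] at z1
    rw [h2.1, h2.2] at z2
    rw [h1.1, h1.2, z1] at e1
    rw [h2.1, h2.2, z2] at e2
    rw [heq'] at e1
    exact e1.trans e2.symm
  · intro b hb s hs
    obtain ⟨ω, hωE, hωp⟩ := exists_pos_of_Pr_pos hp (indep_pos hp hYZ hb hs)
    refine ⟨X ω, mem_supp_of_pos hp X hωp, ?_⟩
    have z : Z ω = FZ (X ω, Y ω) := mem_of_Pr_one hp hFZ hωp
    rw [hωE.1] at z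
    exact z.symm.trans hωE.2
  · intro a ha s hs
    obtain ⟨ω, hωE, hωp⟩ := exists_pos_of_Pr_pos hp (indep_pos hp hXZ ha hs)
    refine ⟨Y ω, mem_supp_of_pos hp Y hωp, ?_⟩
    have z : Z ω = FZ (X ω, Y ω) := mem_of_Pr_one hp hFZ hωp
    rw [hωE.1] at z
    exact z.symm.trans hωE.2

end PrAux

/-- Proposition `labeling`: if the random variables `{A_i}_{i ∈ E}` satisfy
the Fano-non-Fano condition, then there exists an abelian group labeling
`(𝒜, {θ_i}_{i ∈ E})`, with `𝒜` a finite abelian group. -/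
theorem fnf_implies_abelianLabeling {Ω : Type} (p : Ω → ℝ) (hp : IsProb p)
    {α : Fin 7 → Type} (A : ∀ i, Ω → α i) (hfin : ∀ i, (supp p (A i)).Finite)
    (h : fnf p A) :
    ∃ (𝒜 : Type) (_ : Fintype 𝒜) (inst : AddCommGroup 𝒜) (θ : ∀ i, α i → 𝒜),
      @IsAbelianLabeling Ω p α A 𝒜 inst θ := by
  classical
  -- extract the six Latin-square packages from the tri conditions
  obtain ⟨f, fpt, fmem, finj1, finj2, fsurj1, fsurj2⟩ :=
    tri_pack hp (h.1 0 1 3 (by unfold inDN; decide))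
  obtain ⟨g, gpt, gmem, ginj1, ginj2, gsurj1, gsurj2⟩ :=
    tri_pack hp (h.1 0 2 4 (by unfold inDN; decide))
  obtain ⟨k, kpt, kmem, kinj1, kinj2, ksurj1, ksurj2⟩ :=
    tri_pack hp (h.1 1 2 5 (by unfold inDN; decide))
  obtain ⟨u, upt, umem, uinj1, uinj2, usurj1, usurj2⟩ :=
    tri_pack hp (h.1 0 5 6 (by unfold inDN; decide))
  obtain ⟨v, vpt, vmem, vinj1, vinj2, vsurj1, vsurj2⟩ :=
    tri_pack hp (h.1 1 4 6 (by unfold inDN; decide))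
  obtain ⟨w, wpt, wmem, winj1, winj2, wsurj1, wsurj2⟩ :=
    tri_pack hp (h.1 2 3 6 (by unfold inDN; decide))
  -- a base point
  have hU : (0:ℝ) < Pr p Set.univ := by rw [hp.2]; norm_num
  obtain ⟨ω0, -, hω0⟩ := exists_pos_of_Pr_pos hp hU
  obtain ⟨a0, ha0⟩ : ∃ a, a ∈ supp p (A 0) := ⟨A 0 ω0, mem_supp_of_pos hp (A 0) hω0⟩
  obtain ⟨b0, hb0⟩ : ∃ b, b ∈ supp p (A 1) := ⟨A 1 ω0, mem_supp_of_pos hp (A 1) hω0⟩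
  obtain ⟨c0, hc0⟩ : ∃ c, c ∈ supp p (A 2) := ⟨A 2 ω0, mem_supp_of_pos hp (A 2) hω0⟩
  -- points with prescribed values of (A 0, A 1, A 2)
  have i012 : Indep3 p (A 0) (A 1) (A 2) := h.2 0 1 2 (by unfold inIF inDF inDN; decide)
  have trip_pos : ∀ a ∈ supp p (A 0), ∀ b ∈ supp p (A 1), ∀ c ∈ supp p (A 2),
      ∃ ω, 0 < p ω ∧ A 0 ω = a ∧ A 1 ω = b ∧ A 2 ω = c := by
    intro a ha b hb c hc
    have hset : {ω | (fun ω => (A 0 ω, A 1 ω)) ω = (a, b) ∧ A 2 ω = c}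
        = {ω | A 0 ω = a ∧ A 1 ω = b ∧ A 2 ω = c} := by
      ext ω; simp [Prod.ext_iff, and_assoc]
    have hset2 : {ω | (fun ω => (A 0 ω, A 1 ω)) ω = (a, b)}
        = {ω | A 0 ω = a ∧ A 1 ω = b} := by
      ext ω; simp [Prod.ext_iff]
    have h3 : 0 < Pr p {ω | A 0 ω = a ∧ A 1 ω = b ∧ A 2 ω = c} := by
      rw [← hset, i012.2 (a, b) c, hset2]
      exact mul_pos (indep_pos hp i012.1 ha hb) hc
    obtain ⟨ω, hωE, hωp⟩ := exists_pos_of_Pr_pos hp h3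
    exact ⟨ω, hωp, hωE.1, hωE.2.1, hωE.2.2⟩
  -- the two fundamental functional equations
  have star1 : ∀ a ∈ supp p (A 0), ∀ b ∈ supp p (A 1), ∀ c ∈ supp p (A 2),
      u a (k b c) = v b (g a c) := by
    intro a ha b hb c hc
    obtain ⟨ω, hωp, h0, h1, h2⟩ := trip_pos a ha b hb c hc
    have e4 := gpt ω hωp
    have e5 := kpt ω hωp
    have e6u := upt ω hωp
    have e6v := vpt ω hωp
    rw [h0, h2] at e4
    rw [h1, h2] at e5
    rw [h0, e5] at e6u
    rw [h1, e4] at e6v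
    exact e6u.symm.trans e6v
  have star2 : ∀ a ∈ supp p (A 0), ∀ b ∈ supp p (A 1), ∀ c ∈ supp p (A 2),
      u a (k b c) = w c (f a b) := by
    intro a ha b hb c hc
    obtain ⟨ω, hωp, h0, h1, h2⟩ := trip_pos a ha b hb c hc
    have e3 := fpt ω hωp
    have e5 := kpt ω hωp
    have e6u := upt ω hωp
    have e6w := wpt ω hωp
    rw [h0, h1] at e3
    rw [h1, h2] at e5
    rw [h0, e5] at e6u
    rw [h2, e3] at e6w
    exact e6u.symm.trans e6w
  have transfer1 : ∀ a ∈ supp p (A 0), ∀ a' ∈ supp p (A 0), ∀ b ∈ supp p (A 1),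
      ∀ b' ∈ supp p (A 1), f a b = f a' b' → ∀ c ∈ supp p (A 2),
      u a (k b c) = u a' (k b' c) := by
    intro a ha a' ha' b hb b' hb' hf c hc
    rw [star2 a ha b hb c hc, star2 a' ha' b' hb' c hc, hf]
  have Q' : ∀ a ∈ supp p (A 0), ∀ a' ∈ supp p (A 0), ∀ b ∈ supp p (A 1),
      ∀ b' ∈ supp p (A 1), ∀ c ∈ supp p (A 2), ∀ c' ∈ supp p (A 2),
      f a b = f a' b' → g a c = g a' c' → k b c' = k b' c := by
    intro a ha a' ha' b hb b' hb' c hc c' hc' hf hg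
    have e1 : u a (k b c) = u a' (k b' c) := transfer1 a ha a' ha' b hb b' hb' hf c hc
    have e2 : u a (k b c) = u a' (k b c') := by
      rw [star1 a ha b hb c hc, hg, ← star1 a' ha' b hb c' hc']
    exact uinj2 a' ha' _ (kmem b hb c' hc') _ (kmem b' hb' c hc) (e2.symm.trans e1)
  have Qf : ∀ a ∈ supp p (A 0), ∀ a' ∈ supp p (A 0), ∀ b ∈ supp p (A 1),
      ∀ b' ∈ supp p (A 1), ∀ c ∈ supp p (A 2), ∀ c' ∈ supp p (A 2),
      g a c = g a' c' → k b c' = k b' c → f a b = f a' b' := by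
    intro a ha a' ha' b hb b' hb' c hc c' hc' hg hk
    have e1 : w c (f a b) = w c (f a' b') := by
      rw [← star2 a ha b hb c hc, star1 a ha b hb c hc, hg, ← star1 a' ha' b hb c' hc',
          hk, star2 a' ha' b' hb' c hc]
    exact winj2 c hc _ (fmem a ha b hb) _ (fmem a' ha' b' hb') e1
  -- the carrier group
  let G : Type := {x : α 3 // x ∈ supp p (A 3)}
  haveI fintG : Fintype G := (hfin 3).fintype
  have he3 : f a0 b0 ∈ supp p (A 3) := fmem a0 ha0 b0 hb0
  let mzero : G := ⟨f a0 b0, he3⟩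
  choose asl hasl1 hasl2 using fun s : G => fsurj1 b0 hb0 s.1 s.2
  choose bsl hbsl1 hbsl2 using fun s : G => fsurj2 a0 ha0 s.1 s.2
  have asl_eq : ∀ a ∈ supp p (A 0), ∀ s : G, f a b0 = s.1 → asl s = a := by
    intro a ha s hs
    exact finj1 (asl s) (hasl1 s) a ha b0 hb0 ((hasl2 s).trans hs.symm)
  have bsl_eq : ∀ b ∈ supp p (A 1), ∀ s : G, f a0 b = s.1 → bsl s = b := by
    intro b hb s hs
    exact finj2 a0 ha0 (bsl s) (hbsl1 s) b hb ((hbsl2 s).trans hs.symm)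
  choose bneg hbneg1 hbneg2 using fun s : G => fsurj2 (asl s) (hasl1 s) (f a0 b0) he3
  obtain ⟨madd, hmadd⟩ : ∃ m : G → G → G, ∀ s t, (m s t).1 = f (asl s) (bsl t) :=
    ⟨fun s t => ⟨f (asl s) (bsl t), fmem _ (hasl1 s) _ (hbsl1 t)⟩, fun _ _ => rfl⟩
  obtain ⟨mneg, hmneg⟩ : ∃ n : G → G, ∀ s, (n s).1 = f a0 (bneg s) :=
    ⟨fun s => ⟨f a0 (bneg s), fmem _ ha0 _ (hbneg1 s)⟩, fun _ => rfl⟩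
  -- group laws
  have hcomm : ∀ s t : G, madd s t = madd t s := by
    intro s t
    apply Subtype.ext
    rw [hmadd, hmadd]
    obtain ⟨c2, hc2, hgc2⟩ := gsurj2 a0 ha0 (g (asl s) c0) (gmem _ (hasl1 s) c0 hc0)
    obtain ⟨c1, hc1, hgc1⟩ :=
      gsurj2 (asl t) (hasl1 t) (g (asl s) c0) (gmem _ (hasl1 s) c0 hc0)
    have D1 : k b0 c2 = k (bsl s) c0 :=
      Q' (asl s) (hasl1 s) a0 ha0 b0 hb0 (bsl s) (hbsl1 s) c0 hc0 c2 hc2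
        ((hasl2 s).trans (hbsl2 s).symm) hgc2.symm
    have D2 : k b0 c2 = k (bsl t) c1 :=
      Q' (asl t) (hasl1 t) a0 ha0 b0 hb0 (bsl t) (hbsl1 t) c1 hc1 c2 hc2
        ((hasl2 t).trans (hbsl2 t).symm) (hgc1.trans hgc2.symm)
    exact Qf (asl s) (hasl1 s) (asl t) (hasl1 t) (bsl t) (hbsl1 t) (bsl s) (hbsl1 s)
      c0 hc0 c1 hc1 hgc1.symm (D2.symm.trans D1)
  have hassoc : ∀ s t r : G, madd (madd s t) r = madd s (madd t r) := by
    intro s t r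
    apply Subtype.ext
    rw [hmadd, hmadd]
    have hA : f (asl (madd s t)) b0 = f (asl s) (bsl t) :=
      (hasl2 (madd s t)).trans (hmadd s t)
    have hB : f a0 (bsl (madd t r)) = f (asl t) (bsl r) :=
      (hbsl2 (madd t r)).trans (hmadd t r)
    have ht' : f (asl t) b0 = f a0 (bsl t) := (hasl2 t).trans (hbsl2 t).symm
    obtain ⟨c', hc', hkc'⟩ := ksurj2 b0 hb0 (k (bsl r) c0) (kmem _ (hbsl1 r) c0 hc0)
    have e1 : u (asl (madd s t)) (k (bsl r) c0) = u (asl s) (k (bsl t) c') := by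
      rw [← hkc']
      exact transfer1 _ (hasl1 _) _ (hasl1 s) b0 hb0 _ (hbsl1 t) hA c' hc'
    have e2 : u (asl t) (k b0 c') = u a0 (k (bsl t) c') :=
      transfer1 _ (hasl1 t) a0 ha0 b0 hb0 _ (hbsl1 t) ht' c' hc'
    have e3' : u (asl t) (k (bsl r) c0) = u a0 (k (bsl (madd t r)) c0) :=
      transfer1 _ (hasl1 t) a0 ha0 _ (hbsl1 r) _ (hbsl1 _) hB.symm c0 hc0
    have e4 : k (bsl (madd t r)) c0 = k (bsl t) c' := by
      apply uinj2 a0 ha0 _ (kmem _ (hbsl1 _) c0 hc0) _ (kmem _ (hbsl1 t) c' hc')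
      rw [← e3', ← hkc', e2]
    apply winj2 c0 hc0 _ (fmem _ (hasl1 _) _ (hbsl1 r)) _ (fmem _ (hasl1 s) _ (hbsl1 _))
    rw [← star2 _ (hasl1 _) _ (hbsl1 r) c0 hc0, e1, ← e4,
        star2 _ (hasl1 s) _ (hbsl1 _) c0 hc0]
  have hadd_zero : ∀ s : G, madd s mzero = s := by
    intro s
    apply Subtype.ext
    rw [hmadd, bsl_eq b0 hb0 mzero rfl]
    exact hasl2 s
  have hzero_add : ∀ s : G, madd mzero s = s := by
    intro s
    apply Subtype.ext
    rw [hmadd, asl_eq a0 ha0 mzero rfl]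
    exact hbsl2 s
  have hadd_neg : ∀ s : G, madd s (mneg s) = mzero := by
    intro s
    apply Subtype.ext
    rw [hmadd, bsl_eq (bneg s) (hbneg1 s) (mneg s) (hmneg s).symm]
    exact hbneg2 s
  letI addG : Add G := ⟨madd⟩
  letI zeroG : Zero G := ⟨mzero⟩
  letI negG : Neg G := ⟨mneg⟩
  letI instG : AddCommGroup G :=
    { add := madd
      add_assoc := hassoc
      zero := mzero
      zero_add := hzero_add
      add_zero := hadd_zero
      nsmul := nsmulRec
      zsmul := zsmulRec
      neg := mneg
      neg_add_cancel := fun s => (hcomm (mneg s) s).trans (hadd_neg s)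
      add_comm := hcomm }
  have hadd : ∀ s t : G, s + t = madd s t := fun _ _ => rfl
  -- the labeling maps
  choose w6 hw61 hw62 using fun (x : α 6) (hx : x ∈ supp p (A 6)) => wsurj2 c0 hc0 x hx
  choose g1 hg11 hg12 using fun (x : α 4) (hx : x ∈ supp p (A 4)) => gsurj1 c0 hc0 x hx
  choose k1 hk11 hk12 using fun (x : α 5) (hx : x ∈ supp p (A 5)) => ksurj1 c0 hc0 x hx
  obtain ⟨th0, hth0⟩ : ∃ F : α 0 → G, ∀ x (hx : x ∈ supp p (A 0)), (F x).1 = f x b0 :=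
    ⟨fun x => if hx : x ∈ supp p (A 0) then ⟨f x b0, fmem x hx b0 hb0⟩ else mzero,
      fun x hx => congrArg Subtype.val (dif_pos hx)⟩
  obtain ⟨th1, hth1⟩ : ∃ F : α 1 → G, ∀ x (hx : x ∈ supp p (A 1)), (F x).1 = f a0 x :=
    ⟨fun x => if hx : x ∈ supp p (A 1) then ⟨f a0 x, fmem a0 ha0 x hx⟩ else mzero,
      fun x hx => congrArg Subtype.val (dif_pos hx)⟩
  obtain ⟨th2, hth2⟩ : ∃ F : α 2 → G, ∀ x (hx : x ∈ supp p (A 2)),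
      (F x).1 = w6 (w x (f a0 b0)) (wmem x hx (f a0 b0) he3) :=
    ⟨fun x => if hx : x ∈ supp p (A 2) then
        ⟨w6 (w x (f a0 b0)) (wmem x hx (f a0 b0) he3), hw61 _ _⟩ else mzero,
      fun x hx => congrArg Subtype.val (dif_pos hx)⟩
  obtain ⟨th3, hth3⟩ : ∃ F : α 3 → G, ∀ x (hx : x ∈ supp p (A 3)), (F x).1 = x :=
    ⟨fun x => if hx : x ∈ supp p (A 3) then ⟨x, hx⟩ else mzero,
      fun x hx => congrArg Subtype.val (dif_pos hx)⟩
  obtain ⟨th4, hth4⟩ : ∃ F : α 4 → G, ∀ x (hx : x ∈ supp p (A 4)),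
      (F x).1 = f (g1 x hx) b0 :=
    ⟨fun x => if hx : x ∈ supp p (A 4) then ⟨f (g1 x hx) b0, fmem _ (hg11 x hx) b0 hb0⟩
      else mzero, fun x hx => congrArg Subtype.val (dif_pos hx)⟩
  obtain ⟨th5, hth5⟩ : ∃ F : α 5 → G, ∀ x (hx : x ∈ supp p (A 5)),
      (F x).1 = f a0 (k1 x hx) :=
    ⟨fun x => if hx : x ∈ supp p (A 5) then ⟨f a0 (k1 x hx), fmem a0 ha0 _ (hk11 x hx)⟩
      else mzero, fun x hx => congrArg Subtype.val (dif_pos hx)⟩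
  obtain ⟨th6, hth6⟩ : ∃ F : α 6 → G, ∀ x (hx : x ∈ supp p (A 6)), (F x).1 = w6 x hx :=
    ⟨fun x => if hx : x ∈ supp p (A 6) then ⟨w6 x hx, hw61 x hx⟩ else mzero,
      fun x hx => congrArg Subtype.val (dif_pos hx)⟩
  have asl_th0 : ∀ x (hx : x ∈ supp p (A 0)), asl (th0 x) = x := fun x hx =>
    asl_eq x hx (th0 x) (hth0 x hx).symm
  have bsl_th1 : ∀ x (hx : x ∈ supp p (A 1)), bsl (th1 x) = x := fun x hx =>
    bsl_eq x hx (th1 x) (hth1 x hx).symm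
  -- the key translation lemma for th2
  have Pzb : ∀ c (hc : c ∈ supp p (A 2)), k (bsl (th2 c)) c0 = k b0 c := by
    intro c hc
    have h1 : f a0 (bsl (th2 c)) = (th2 c).1 := hbsl2 _
    have h2 : w c0 ((th2 c).1) = w c (f a0 b0) := by
      rw [hth2 c hc]; exact hw62 _ _
    have h3 : u a0 (k (bsl (th2 c)) c0) = u a0 (k b0 c) := by
      rw [star2 a0 ha0 _ (hbsl1 _) c0 hc0, h1, h2, ← star2 a0 ha0 b0 hb0 c hc]
    exact uinj2 a0 ha0 _ (kmem _ (hbsl1 _) c0 hc0) _ (kmem b0 hb0 c hc) h3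
  -- bijectivity of the labeling maps
  have bij0 : Set.BijOn th0 (supp p (A 0)) Set.univ := by
    refine ⟨fun x _ => Set.mem_univ _, ?_, ?_⟩
    · intro x hx y hy hxy
      refine finj1 x hx y hy b0 hb0 ?_
      rw [← hth0 x hx, ← hth0 y hy, hxy]
    · intro s _
      exact ⟨asl s, hasl1 s, Subtype.ext ((hth0 _ (hasl1 s)).trans (hasl2 s))⟩
  have bij1 : Set.BijOn th1 (supp p (A 1)) Set.univ := by
    refine ⟨fun x _ => Set.mem_univ _, ?_, ?_⟩
    · intro x hx y hy hxy
      refine finj2 a0 ha0 x hx y hy ?_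
      rw [← hth1 x hx, ← hth1 y hy, hxy]
    · intro s _
      exact ⟨bsl s, hbsl1 s, Subtype.ext ((hth1 _ (hbsl1 s)).trans (hbsl2 s))⟩
  have bij2 : Set.BijOn th2 (supp p (A 2)) Set.univ := by
    refine ⟨fun x _ => Set.mem_univ _, ?_, ?_⟩
    · intro x hx y hy hxy
      have h1 : w x (f a0 b0) = w y (f a0 b0) := by
        rw [← hw62 (w x (f a0 b0)) (wmem x hx (f a0 b0) he3),
          ← hw62 (w y (f a0 b0)) (wmem y hy (f a0 b0) he3), ← hth2 x hx, ← hth2 y hy, hxy]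
      exact winj1 x hx y hy (f a0 b0) he3 h1
    · intro s _
      obtain ⟨c, hc, hwc⟩ := wsurj1 (f a0 b0) he3 (w c0 s.1) (wmem c0 hc0 s.1 s.2)
      refine ⟨c, hc, Subtype.ext ?_⟩
      refine winj2 c0 hc0 _ (th2 c).2 _ s.2 ?_
      rw [hth2 c hc, hw62 _ (wmem c hc (f a0 b0) he3), hwc]
  have bij3 : Set.BijOn th3 (supp p (A 3)) Set.univ := by
    refine ⟨fun x _ => Set.mem_univ _, ?_, ?_⟩
    · intro x hx y hy hxy
      rw [← hth3 x hx, ← hth3 y hy, hxy]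
    · intro s _
      exact ⟨s.1, s.2, Subtype.ext (hth3 s.1 s.2)⟩
  have bij4 : Set.BijOn th4 (supp p (A 4)) Set.univ := by
    refine ⟨fun x _ => Set.mem_univ _, ?_, ?_⟩
    · intro x hx y hy hxy
      have h1 : g1 x hx = g1 y hy := by
        refine finj1 _ (hg11 x hx) _ (hg11 y hy) b0 hb0 ?_
        rw [← hth4 x hx, ← hth4 y hy, hxy]
      rw [← hg12 x hx, ← hg12 y hy, h1]
    · intro s _
      have hx : g (asl s) c0 ∈ supp p (A 4) := gmem _ (hasl1 s) c0 hc0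
      refine ⟨g (asl s) c0, hx, Subtype.ext ?_⟩
      have h1 : g1 _ hx = asl s :=
        ginj1 _ (hg11 _ hx) _ (hasl1 s) c0 hc0 (hg12 _ hx)
      rw [hth4 _ hx, h1, hasl2 s]
  have bij5 : Set.BijOn th5 (supp p (A 5)) Set.univ := by
    refine ⟨fun x _ => Set.mem_univ _, ?_, ?_⟩
    · intro x hx y hy hxy
      have h1 : k1 x hx = k1 y hy := by
        refine finj2 a0 ha0 _ (hk11 x hx) _ (hk11 y hy) ?_
        rw [← hth5 x hx, ← hth5 y hy, hxy]
      rw [← hk12 x hx, ← hk12 y hy, h1]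
    · intro s _
      have hx : k (bsl s) c0 ∈ supp p (A 5) := kmem _ (hbsl1 s) c0 hc0
      refine ⟨k (bsl s) c0, hx, Subtype.ext ?_⟩
      have h1 : k1 _ hx = bsl s :=
        kinj1 _ (hk11 _ hx) _ (hbsl1 s) c0 hc0 (hk12 _ hx)
      rw [hth5 _ hx, h1, hbsl2 s]
  have bij6 : Set.BijOn th6 (supp p (A 6)) Set.univ := by
    refine ⟨fun x _ => Set.mem_univ _, ?_, ?_⟩
    · intro x hx y hy hxy
      rw [← hw62 x hx, ← hw62 y hy, ← hth6 x hx, ← hth6 y hy, hxy]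
    · intro s _
      have hx : w c0 s.1 ∈ supp p (A 6) := wmem c0 hc0 s.1 s.2
      refine ⟨w c0 s.1, hx, Subtype.ext ?_⟩
      refine winj2 c0 hc0 _ (th6 _).2 _ s.2 ?_
      rw [hth6 _ hx, hw62 _ hx]
  -- the labeling identities, pointwise on the positive-probability points
  have key : ∀ ω, 0 < p ω →
      th3 (A 3 ω) = madd (th0 (A 0 ω)) (th1 (A 1 ω)) ∧
      th4 (A 4 ω) = madd (th0 (A 0 ω)) (th2 (A 2 ω)) ∧
      th5 (A 5 ω) = madd (th1 (A 1 ω)) (th2 (A 2 ω)) ∧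
      th6 (A 6 ω) = madd (madd (th0 (A 0 ω)) (th1 (A 1 ω))) (th2 (A 2 ω)) := by
    intro ω hω
    have ha := mem_supp_of_pos hp (A 0) hω
    have hb := mem_supp_of_pos hp (A 1) hω
    have hc := mem_supp_of_pos hp (A 2) hω
    have h3m := mem_supp_of_pos hp (A 3) hω
    have h4m := mem_supp_of_pos hp (A 4) hω
    have h5m := mem_supp_of_pos hp (A 5) hω
    have h6m := mem_supp_of_pos hp (A 6) hω
    have e12 : A 3 ω = f (A 0 ω) (A 1 ω) := fpt ω hω
    have e13 : A 4 ω = g (A 0 ω) (A 2 ω) := gpt ω hω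
    have e23 : A 5 ω = k (A 1 ω) (A 2 ω) := kpt ω hω
    have e6 : A 6 ω = u (A 0 ω) (k (A 1 ω) (A 2 ω)) := by
      rw [← e23]; exact upt ω hω
    refine ⟨?_, ?_, ?_, ?_⟩
    · apply Subtype.ext
      rw [hmadd, hth3 _ h3m, asl_th0 _ ha, bsl_th1 _ hb, e12]
    · apply Subtype.ext
      rw [hmadd, hth4 _ h4m, asl_th0 _ ha]
      have hgeq : g (g1 (A 4 ω) h4m) c0 = g (A 0 ω) (A 2 ω) := (hg12 _ h4m).trans e13
      refine winj2 c0 hc0 _ (fmem _ (hg11 _ h4m) b0 hb0) _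
        (fmem _ ha _ (hbsl1 (th2 (A 2 ω)))) ?_
      rw [← star2 _ (hg11 _ h4m) b0 hb0 c0 hc0, star1 _ (hg11 _ h4m) b0 hb0 c0 hc0,
        hgeq, ← star1 _ ha b0 hb0 _ hc, ← Pzb _ hc,
        star2 _ ha _ (hbsl1 (th2 (A 2 ω))) c0 hc0]
    · apply Subtype.ext
      rw [hmadd, hth5 _ h5m]
      have hkeq : k (k1 (A 5 ω) h5m) c0 = k (A 1 ω) (A 2 ω) := (hk12 _ h5m).trans e23
      have hfa1 : f a0 (A 1 ω) = f (asl (th1 (A 1 ω))) b0 :=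
        ((hasl2 (th1 (A 1 ω))).trans (hth1 _ hb)).symm
      refine winj2 c0 hc0 _ (fmem a0 ha0 _ (hk11 _ h5m)) _
        (fmem _ (hasl1 (th1 (A 1 ω))) _ (hbsl1 (th2 (A 2 ω)))) ?_
      rw [← star2 a0 ha0 _ (hk11 _ h5m) c0 hc0, hkeq,
        transfer1 a0 ha0 _ (hasl1 (th1 (A 1 ω))) _ hb b0 hb0 hfa1 _ hc,
        ← Pzb _ hc, star2 _ (hasl1 (th1 (A 1 ω))) _ (hbsl1 (th2 (A 2 ω))) c0 hc0]
    · apply Subtype.ext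
      rw [hmadd, hth6 _ h6m]
      have hfa1 : f (A 0 ω) (A 1 ω) = f (asl (madd (th0 (A 0 ω)) (th1 (A 1 ω)))) b0 := by
        rw [hasl2 (madd (th0 (A 0 ω)) (th1 (A 1 ω))), hmadd, asl_th0 _ ha, bsl_th1 _ hb]
      refine winj2 c0 hc0 _ (hw61 _ h6m) _
        (fmem _ (hasl1 (madd (th0 (A 0 ω)) (th1 (A 1 ω)))) _ (hbsl1 (th2 (A 2 ω)))) ?_
      rw [hw62 _ h6m, e6,
        transfer1 _ ha _ (hasl1 (madd (th0 (A 0 ω)) (th1 (A 1 ω)))) _ hb b0 hb0 hfa1 _ hc,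
        ← Pzb _ hc,
        star2 _ (hasl1 (madd (th0 (A 0 ω)) (th1 (A 1 ω)))) _ (hbsl1 (th2 (A 2 ω))) c0 hc0]
  -- assemble
  let θ : ∀ i : Fin 7, α i → G := fun i =>
    match i with
    | ⟨0, _⟩ => th0
    | ⟨1, _⟩ => th1
    | ⟨2, _⟩ => th2
    | ⟨3, _⟩ => th3
    | ⟨4, _⟩ => th4
    | ⟨5, _⟩ => th5
    | ⟨6, _⟩ => th6
    | ⟨n + 7, hn⟩ => absurd hn (by omega)
  have hbij : ∀ i, Set.BijOn (θ i) (supp p (A i)) Set.univ := by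
    intro i
    fin_cases i
    · exact bij0
    · exact bij1
    · exact bij2
    · exact bij3
    · exact bij4
    · exact bij5
    · exact bij6
  have hPr1 : Pr p {ω | θ 3 (A 3 ω) = θ 0 (A 0 ω) + θ 1 (A 1 ω)
      ∧ θ 4 (A 4 ω) = θ 0 (A 0 ω) + θ 2 (A 2 ω)
      ∧ θ 5 (A 5 ω) = θ 1 (A 1 ω) + θ 2 (A 2 ω)
      ∧ θ 6 (A 6 ω) = θ 0 (A 0 ω) + θ 1 (A 1 ω) + θ 2 (A 2 ω)} = 1 := by
    have hsub : {ω | 0 < p ω} ⊆ {ω | θ 3 (A 3 ω) = θ 0 (A 0 ω) + θ 1 (A 1 ω)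
        ∧ θ 4 (A 4 ω) = θ 0 (A 0 ω) + θ 2 (A 2 ω)
        ∧ θ 5 (A 5 ω) = θ 1 (A 1 ω) + θ 2 (A 2 ω)
        ∧ θ 6 (A 6 ω) = θ 0 (A 0 ω) + θ 1 (A 1 ω) + θ 2 (A 2 ω)} := by
      intro ω hω
      obtain ⟨k1', k2', k3', k4'⟩ := key ω hω
      exact ⟨k1', k2', k3', k4'⟩
    have hc : Pr p {ω | 0 < p ω}ᶜ = 0 := by
      refine le_antisymm ?_ (Pr_nonneg hp _)
      refine tsum_nonpos fun x => ?_
      have hx : ¬ 0 < p x.1 := x.2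
      linarith [hp.1 x.1, hx]
    have hpos1 : Pr p {ω | 0 < p ω} = 1 := by
      have := Pr_add_compl hp {ω | 0 < p ω}; linarith
    have h1 := Pr_le_one hp {ω | θ 3 (A 3 ω) = θ 0 (A 0 ω) + θ 1 (A 1 ω)
        ∧ θ 4 (A 4 ω) = θ 0 (A 0 ω) + θ 2 (A 2 ω)
        ∧ θ 5 (A 5 ω) = θ 1 (A 1 ω) + θ 2 (A 2 ω)
        ∧ θ 6 (A 6 ω) = θ 0 (A 0 ω) + θ 1 (A 1 ω) + θ 2 (A 2 ω)}
    have h2 := Pr_mono hp hsub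
    linarith
  exact ⟨G, fintG, instG, θ, hbij, hPr1⟩

end
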